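/- Fin'_ω embeds isomorphically into Fin_ω, i.e., Fin'_ω ⊑ Fin_ω. -/

import Mathlib

/-- `FinPow n` is the Fubini power `Fin^{n+1}` of the ideal of finite sets, an
ideal on `ω^{n+1}` (represented as `Fin (n+1) → ℕ`). -/
def FinPow : (n : ℕ) → Set (Set (Fin (n + 1) → ℕ))
  | 0 => {A | A.Finite}
  | n + 1 => {A | {k : ℕ | {y : Fin (n + 1) → ℕ | Fin.cons k y ∈ A} ∉ FinPow n}.Finite}

/-- Projection of `ω^n` onto the last `m` coordinates. -/
def lastProj {m n : ℕ} (h : m ≤ n) (x : Fin n → ℕ) : Fin m → ℕ :=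
  fun k => x ⟨n - m + k.val, by have := k.isLt; omega⟩

/-- The inductive limit `Fin_ω` of the Fubini powers `(Fin^n)_{n>0}` along the
projections onto the last coordinates. -/
def FinOmega : Set (Set (Σ n : ℕ, Fin (n + 1) → ℕ)) :=
  {M | ∃ m : ℕ, ∃ P : Set (Fin (m + 1) → ℕ), Pᶜ ∈ FinPow m ∧
    ∀ (n : ℕ) (h : m ≤ n), ∀ x : Fin (n + 1) → ℕ,
      lastProj (Nat.succ_le_succ h) x ∈ P → (⟨n, x⟩ : Σ n : ℕ, Fin (n + 1) → ℕ) ∉ M}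

/-- A system of partitions `{X_s : s ∈ ω^{n+1}}` of `ω` into infinite sets,
with all finite cross-intersections infinite. -/
structure PartitionSystem (X : (n : ℕ) → (Fin (n + 1) → ℕ) → Set ℕ) : Prop where
  infinite : ∀ n s, (X n s).Infinite
  disjoint : ∀ (n : ℕ) (s t : Fin (n + 1) → ℕ), s ≠ t → Disjoint (X n s) (X n t)
  cover : ∀ n : ℕ, (⋃ s, X n s) = Set.univ
  cross : ∀ (F : Finset ℕ) (s : ∀ i : ℕ, Fin (i + 1) → ℕ),
    (⋂ i ∈ F, X i (s i)).Infinite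

/-- The copy `Fin^{n+2}({X_s : s ∈ ω^{n+1}})` on `ω` of the Fubini power,
with partition pieces `X s`. -/
def FinPowCopy {n : ℕ} (X : (Fin (n + 1) → ℕ) → Set ℕ) : Set (Set ℕ) :=
  {A | {s : Fin (n + 1) → ℕ | ¬ (A ∩ X s).Finite} ∈ FinPow n}

/-- `Fin'_ω`: the ideal on `ω` generated by `⋃ n, Fin^{n+2}({X_s : s ∈ ω^{n+1}})`. -/
def FinOmega' (X : (n : ℕ) → (Fin (n + 1) → ℕ) → Set ℕ) : Set (Set ℕ) :=
  {A | ∃ F : Finset ℕ, ∃ B : ℕ → Set ℕ,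
    (∀ n ∈ F, B n ∈ FinPowCopy (X n)) ∧ A ⊆ ⋃ n ∈ F, B n}


section Aux

lemma finPow_succ_def (n : ℕ) (A : Set (Fin (n + 2) → ℕ)) :
    A ∈ FinPow (n+1) ↔ {k : ℕ | {y : Fin (n + 1) → ℕ | Fin.cons k y ∈ A} ∉ FinPow n}.Finite :=
  Iff.rfl

lemma lastProj_self {n : ℕ} (h : n ≤ n) (x : Fin n → ℕ) : lastProj h x = x := by
  funext k
  simp only [lastProj]
  congr 1
  exact Fin.ext (by simp)

lemma lastProj_cons {m n : ℕ} (h : m ≤ n) (k : ℕ) (y : Fin n → ℕ) :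
    lastProj (h.trans (Nat.le_succ n)) (Fin.cons k y) = lastProj h y := by
  funext j
  have hj := j.isLt
  simp only [lastProj]
  have h1 : (⟨n + 1 - m + j.val, by omega⟩ : Fin (n+1)) =
      Fin.succ ⟨n - m + j.val, by omega⟩ := Fin.ext (by simp; omega)
  rw [h1, Fin.cons_succ]

lemma lastProj_lastProj {a b c : ℕ} (h1 : a ≤ b) (h2 : b ≤ c) (x : Fin c → ℕ) :
    lastProj h1 (lastProj h2 x) = lastProj (h1.trans h2) x := by
  funext j
  have hj := j.isLt
  simp only [lastProj]
  congr 1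
  exact Fin.ext (by simp; omega)

lemma finPow_mono : ∀ (n : ℕ) (A B : Set (Fin (n + 1) → ℕ)),
    A ⊆ B → B ∈ FinPow n → A ∈ FinPow n := by
  intro n
  induction n with
  | zero => exact fun A B hAB hB => Set.Finite.subset hB hAB
  | succ n ih =>
    intro A B hAB hB
    refine Set.Finite.subset hB fun k hk => ?_
    intro hBk
    exact hk (ih _ _ (fun y hy => hAB hy) hBk)

lemma finPow_finite : ∀ (n : ℕ) (A : Set (Fin (n + 1) → ℕ)), A.Finite → A ∈ FinPow n := by
  intro n
  induction n with
  | zero => exact fun A hA => hA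
  | succ n ih =>
    intro A hA
    refine Set.Finite.subset (Set.finite_empty) fun k hk => ?_
    exact hk (ih _ (hA.preimage (fun y hy y' hy' hyy => by
      have := congrFun hyy
      funext i
      simpa using this i.succ)))

lemma finPow_empty (n : ℕ) : (∅ : Set (Fin (n + 1) → ℕ)) ∈ FinPow n :=
  finPow_finite n ∅ Set.finite_empty

lemma finPow_union : ∀ (n : ℕ) (A B : Set (Fin (n + 1) → ℕ)),
    A ∈ FinPow n → B ∈ FinPow n → A ∪ B ∈ FinPow n := by
  intro n
  induction n with
  | zero => exact fun A B hA hB => Set.Finite.union hA hB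
  | succ n ih =>
    intro A B hA hB
    refine Set.Finite.subset (hA.union hB) fun k hk => ?_
    by_contra hc
    simp only [Set.mem_union, Set.mem_setOf_eq, not_or, not_not] at hc
    exact hk (finPow_mono _ _ _ (fun y hy => hy) (by
      have := ih _ _ hc.1 hc.2
      exact finPow_mono _ _ _ (fun y hy => (hy : _ ∈ A ∪ B)) this))

lemma cons_inj {n : ℕ} (k : ℕ) : Function.Injective (fun y : Fin (n+1) → ℕ => (Fin.cons k y : Fin (n+2) → ℕ)) := by
  intro a b hab
  funext i
  simpa using congrFun hab i.succ

lemma cons_inj1 (k : ℕ) : Function.Injective (fun y : Fin 1 → ℕ => (Fin.cons k y : Fin 2 → ℕ)) := by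
  intro a b hab
  funext i
  have : i = 0 := Subsingleton.elim _ _
  subst this
  simpa using congrFun hab 1

lemma fin1_eq (y : Fin 1 → ℕ) (k : ℕ) (h : y 0 = k) : y = fun _ => k := by
  funext i
  have : i = 0 := Subsingleton.elim _ _
  subst this; exact h

-- L5: free-front cylinder
lemma finPow_cyl : ∀ (d n : ℕ) (S : Set (Fin (n + 1) → ℕ)), S ∈ FinPow n →
    {z : Fin (n + d + 1) → ℕ | lastProj (by omega : n + 1 ≤ n + d + 1) z ∈ S} ∈ FinPow (n + d) := by
  intro d
  induction d with
  | zero =>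
    intro n S hS
    have : {z : Fin (n + 0 + 1) → ℕ | lastProj (by omega : n + 1 ≤ n + 0 + 1) z ∈ S} = S := by
      ext z
      simp only [Set.mem_setOf_eq]
      rw [show lastProj (by omega : n + 1 ≤ n + 0 + 1) z = z from lastProj_self (le_refl _) z]
    rwa [this]
  | succ d ih =>
    intro n S hS
    refine Set.Finite.subset Set.finite_empty fun k hk => ?_
    exfalso; apply hk
    have key : {y : Fin (n + d + 1) → ℕ | Fin.cons k y ∈
        {z : Fin (n + (d+1) + 1) → ℕ | lastProj (by omega : n + 1 ≤ n + (d+1) + 1) z ∈ S}} =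
        {y : Fin (n + d + 1) → ℕ | lastProj (by omega : n + 1 ≤ n + d + 1) y ∈ S} := by
      ext y
      simp only [Set.mem_setOf_eq]
      rw [show lastProj (by omega : n + 1 ≤ n + (d+1) + 1) (Fin.cons k y)
        = lastProj (by omega : n + 1 ≤ n + d + 1) y from lastProj_cons _ k y]
    have := ih n S hS
    rw [← key] at this
    exact this

-- general version
lemma finPow_cyl' {n m : ℕ} (h : n ≤ m) (S : Set (Fin (n + 1) → ℕ)) (hS : S ∈ FinPow n) :
    {z : Fin (m + 1) → ℕ | lastProj (Nat.succ_le_succ h) z ∈ S} ∈ FinPow m := by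
  obtain ⟨d, rfl⟩ := Nat.exists_eq_add_of_le h
  exact finPow_cyl d n S hS

lemma init_cons {n : ℕ} (k : ℕ) (y : Fin (n + 1) → ℕ) :
    Fin.init (Fin.cons k y : Fin (n+2) → ℕ) = Fin.cons k (Fin.init y) := by
  funext i
  induction i using Fin.cases with
  | zero => simp [Fin.init]
  | succ i =>
    simp only [Fin.init, Fin.cons_succ]
    rw [← Fin.succ_castSucc, Fin.cons_succ]

lemma init_cons1 (k : ℕ) (y : Fin 1 → ℕ) :
    Fin.init (Fin.cons k y : Fin 2 → ℕ) = fun _ => k := by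
  apply fin1_eq
  simp [Fin.init]

-- L6': first-coords cylinder
lemma finPow_initCyl : ∀ (n : ℕ) (S : Set (Fin (n + 1) → ℕ)), S ∈ FinPow n →
    {z : Fin (n + 2) → ℕ | Fin.init z ∈ S} ∈ FinPow (n + 1) := by
  intro n
  induction n with
  | zero =>
    intro S hS
    have hsub : {k : ℕ | {y : Fin 1 → ℕ | Fin.cons k y ∈ {z : Fin 2 → ℕ | Fin.init z ∈ S}} ∉ FinPow 0}
        ⊆ (fun k => (fun _ => k : Fin 1 → ℕ)) ⁻¹' S := by
      intro k hk
      simp only [Set.mem_setOf_eq] at hk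
      by_contra hc
      apply hk
      have he : {y : Fin 1 → ℕ | Fin.init (Fin.cons k y : Fin 2 → ℕ) ∈ S} = ∅ := by
        ext y
        simp only [Set.mem_setOf_eq, Set.mem_empty_iff_false, iff_false]
        intro hy
        rw [init_cons1] at hy
        exact hc hy
      rw [he]; exact Set.finite_empty
    refine Set.Finite.subset ?_ hsub
    refine Set.Finite.preimage (fun a _ b _ hab => by simpa using congrFun hab 0) hS
  | succ n ih =>
    intro S hS
    refine Set.Finite.subset hS fun k hk => ?_
    intro hSk
    apply hk
    have key : {y : Fin (n+2) → ℕ | Fin.cons k y ∈ {z : Fin (n+3) → ℕ | Fin.init z ∈ S}}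
        = {y : Fin (n+2) → ℕ | Fin.init y ∈ {w : Fin (n+1) → ℕ | Fin.cons k w ∈ S}} := by
      ext y
      simp only [Set.mem_setOf_eq, init_cons]
    rw [key]
    exact ih _ hSk

-- L7: finite fibers over init
lemma finPow_fiberFinite : ∀ (n : ℕ) (W : Set (Fin (n + 2) → ℕ)),
    (∀ s : Fin (n + 1) → ℕ, {z | z ∈ W ∧ Fin.init z = s}.Finite) → W ∈ FinPow (n + 1) := by
  intro n
  induction n with
  | zero =>
    intro W hW
    refine Set.Finite.subset Set.finite_empty fun k hk => ?_
    exfalso; apply hk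
    have : {y : Fin 1 → ℕ | Fin.cons k y ∈ W}.Finite := by
      refine Set.Finite.of_finite_image ?_ ((cons_inj1 k).injOn)
      refine (hW (fun _ => k)).subset ?_
      rintro z ⟨y, hy, rfl⟩
      exact ⟨hy, init_cons1 k y⟩
    exact this
  | succ n ih =>
    intro W hW
    refine Set.Finite.subset Set.finite_empty fun k hk => ?_
    exfalso; apply hk
    apply ih
    intro s
    refine Set.Finite.of_finite_image ?_ ((cons_inj k).injOn)
    refine (hW (Fin.cons k s)).subset ?_
    rintro z ⟨y, ⟨hy1, hy2⟩, rfl⟩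
    exact ⟨hy1, by rw [init_cons, hy2]⟩

lemma finOmega_subset {M M' : Set (Σ n : ℕ, Fin (n + 1) → ℕ)} (h : M' ⊆ M)
    (hM : M ∈ FinOmega) : M' ∈ FinOmega := by
  obtain ⟨m, P, hP, hc⟩ := hM
  exact ⟨m, P, hP, fun n hn x hx hmem => hc n hn x hx (h hmem)⟩

lemma finOmega_empty : (∅ : Set (Σ n : ℕ, Fin (n + 1) → ℕ)) ∈ FinOmega :=
  ⟨0, Set.univ, by rw [Set.compl_univ]; exact finPow_empty 0,
    fun n hn x hx hmem => hmem⟩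

lemma finOmega_raise {M : Set (Σ n : ℕ, Fin (n + 1) → ℕ)} {m : ℕ}
    (P : Set (Fin (m + 1) → ℕ)) (hP : Pᶜ ∈ FinPow m)
    (hc : ∀ (n : ℕ) (h : m ≤ n), ∀ x : Fin (n + 1) → ℕ,
      lastProj (Nat.succ_le_succ h) x ∈ P → (⟨n, x⟩ : Σ n : ℕ, Fin (n + 1) → ℕ) ∉ M)
    {m' : ℕ} (hmm : m ≤ m') :
    ∃ P : Set (Fin (m' + 1) → ℕ), Pᶜ ∈ FinPow m' ∧
    ∀ (n : ℕ) (h : m' ≤ n), ∀ x : Fin (n + 1) → ℕ,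
      lastProj (Nat.succ_le_succ h) x ∈ P → (⟨n, x⟩ : Σ n : ℕ, Fin (n + 1) → ℕ) ∉ M := by
  refine ⟨{z | lastProj (Nat.succ_le_succ hmm) z ∈ P}, ?_, ?_⟩
  · have : {z : Fin (m' + 1) → ℕ | lastProj (Nat.succ_le_succ hmm) z ∈ P}ᶜ
        = {z : Fin (m' + 1) → ℕ | lastProj (Nat.succ_le_succ hmm) z ∈ Pᶜ} := by
      ext z; simp
    rw [this]
    exact finPow_cyl' hmm _ hP
  · intro n hn x hx
    refine hc n (hmm.trans hn) x ?_
    have hx' : lastProj (Nat.succ_le_succ hmm) (lastProj (Nat.succ_le_succ hn) x) ∈ P := hx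
    rw [lastProj_lastProj] at hx'
    exact hx'

lemma finOmega_union {M₁ M₂ : Set (Σ n : ℕ, Fin (n + 1) → ℕ)}
    (h1 : M₁ ∈ FinOmega) (h2 : M₂ ∈ FinOmega) : M₁ ∪ M₂ ∈ FinOmega := by
  obtain ⟨m1, P1, hP1, hc1⟩ := h1
  obtain ⟨m2, P2, hP2, hc2⟩ := h2
  set m := max m1 m2 with hm
  obtain ⟨Q1, hQ1, hcc1⟩ := finOmega_raise P1 hP1 hc1 (le_max_left m1 m2)
  obtain ⟨Q2, hQ2, hcc2⟩ := finOmega_raise P2 hP2 hc2 (le_max_right m1 m2)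
  refine ⟨m, Q1 ∩ Q2, ?_, ?_⟩
  · rw [Set.compl_inter]
    exact finPow_union _ _ _ hQ1 hQ2
  · intro n hn x hx hmem
    cases hmem with
    | inl h => exact hcc1 n hn x hx.1 h
    | inr h => exact hcc2 n hn x hx.2 h

abbrev Cell := (Σ n : ℕ, Fin (n + 1) → ℕ)

/-- the target set for a cell -/
def Yset (X : (n : ℕ) → (Fin (n + 1) → ℕ) → Set ℕ) (N : ℕ) (x : Fin (N + 1) → ℕ) : Set ℕ :=
  {b | ∀ n (h : n + 1 ≤ N), b ∈ X n (Fin.init (lastProj (Nat.succ_le_succ h) x))}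

lemma yset_infinite (X : (n : ℕ) → (Fin (n + 1) → ℕ) → Set ℕ) (hX : PartitionSystem X)
    (N : ℕ) (x : Fin (N + 1) → ℕ) : (Yset X N x).Infinite := by
  classical
  refine (hX.cross (Finset.range N) (fun i =>
    if h : i + 1 ≤ N then Fin.init (lastProj (Nat.succ_le_succ h) x) else fun _ => 0)).mono ?_
  intro b hb
  intro n hn
  simp only [Set.mem_iInter] at hb
  have hb' : b ∈ X n (if h : n + 1 ≤ N then Fin.init (lastProj (Nat.succ_le_succ h) x)
      else fun _ => 0) := hb n (Finset.mem_range.mpr hn)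
  rwa [dif_pos hn] at hb'

noncomputable def greedyU (Y : ℕ → Set ℕ) : ℕ → Finset ℕ
  | 0 => ∅
  | (i+1) => greedyU Y i ∪ {sInf (Y i \ ↑(greedyU Y i)),
      sInf ((↑(greedyU Y i) ∪ {sInf (Y i \ ↑(greedyU Y i))} : Set ℕ)ᶜ)}

noncomputable def ga (Y : ℕ → Set ℕ) (i : ℕ) : ℕ := sInf (Y i \ ↑(greedyU Y i))

noncomputable def gr (Y : ℕ → Set ℕ) (i : ℕ) : ℕ :=
  sInf ((↑(greedyU Y i) ∪ {ga Y i} : Set ℕ)ᶜ)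

section Greedy
variable {Y : ℕ → Set ℕ} (hY : ∀ i, (Y i).Infinite)

lemma greedyU_succ (Y : ℕ → Set ℕ) (i : ℕ) :
    greedyU Y (i + 1) = greedyU Y i ∪ {ga Y i, gr Y i} := rfl

lemma greedyU_mono (Y : ℕ → Set ℕ) {i j : ℕ} (h : i ≤ j) : greedyU Y i ⊆ greedyU Y j := by
  induction j with
  | zero => simp [Nat.le_zero.mp h]
  | succ j ih =>
    rcases Nat.lt_or_ge i (j+1) with hj | hj
    · exact (ih (by omega)).trans (by rw [greedyU_succ]; exact Finset.subset_union_left)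
    · have : i = j + 1 := by omega
      subst this; exact fun t ht => ht

include hY in
lemma ga_spec (i : ℕ) : ga Y i ∈ Y i ∧ ga Y i ∉ greedyU Y i := by
  have hne : (Y i \ ↑(greedyU Y i)).Nonempty :=
    ((hY i).diff (Finset.finite_toSet _)).nonempty
  have := Nat.sInf_mem hne
  exact ⟨this.1, fun hc => this.2 (Finset.mem_coe.mpr hc)⟩

lemma gr_spec (i : ℕ) : gr Y i ∉ (↑(greedyU Y i) ∪ {ga Y i} : Set ℕ) := by
  have hfin : ((↑(greedyU Y i) ∪ {ga Y i} : Set ℕ)).Finite :=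
    (Finset.finite_toSet _).union (Set.finite_singleton _)
  exact Nat.sInf_mem hfin.infinite_compl.nonempty

lemma ga_mem_succ (i : ℕ) : ga Y i ∈ greedyU Y (i + 1) := by
  rw [greedyU_succ]; simp

lemma gr_mem_succ (i : ℕ) : gr Y i ∈ greedyU Y (i + 1) := by
  rw [greedyU_succ]; simp

include hY in
lemma ga_inj : Function.Injective (ga Y) := by
  intro i j hij
  by_contra hne
  rcases Nat.lt_or_ge i j with h | h
  · have h1 : ga Y i ∈ greedyU Y j := greedyU_mono Y (by omega) (ga_mem_succ i)
    rw [hij] at h1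
    exact (ga_spec hY j).2 h1
  · have h' : j < i := by omega
    have h1 : ga Y j ∈ greedyU Y i := greedyU_mono Y (by omega) (ga_mem_succ j)
    rw [← hij] at h1
    exact (ga_spec hY i).2 h1

include hY in
lemma gr_not_ga (i j : ℕ) : gr Y i ≠ ga Y j := by
  intro hc
  rcases Nat.lt_or_ge i j with h | h
  · have h1 : gr Y i ∈ greedyU Y j := greedyU_mono Y (by omega) (gr_mem_succ i)
    rw [hc] at h1
    exact (ga_spec hY j).2 h1
  · rcases Nat.eq_or_lt_of_le h with heq | h'
    · cases heq
      refine (gr_spec (Y := Y) i) ?_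
      rw [hc]; right; rfl
    · have h1 : ga Y j ∈ greedyU Y i := greedyU_mono Y (by omega) (ga_mem_succ j)
      refine (gr_spec (Y := Y) i) ?_
      rw [hc]; left; exact_mod_cast h1

lemma gr_inj : Function.Injective (gr Y) := by
  intro i j hij
  by_contra hne
  rcases Nat.lt_or_ge i j with h | h
  · have h1 : gr Y i ∈ greedyU Y j := greedyU_mono Y (by omega) (gr_mem_succ i)
    rw [hij] at h1
    exact (gr_spec j) (Or.inl (by exact_mod_cast h1))
  · have h' : j < i := by omega
    have h1 : gr Y j ∈ greedyU Y i := greedyU_mono Y (by omega) (gr_mem_succ j)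
    rw [← hij] at h1
    exact (gr_spec i) (Or.inl (by exact_mod_cast h1))

include hY in
lemma compl_range_ga_infinite : ((Set.range (ga Y))ᶜ).Infinite := by
  refine Set.Infinite.mono ?_ (Set.infinite_range_of_injective (gr_inj (Y := Y)))
  rintro t ⟨i, rfl⟩
  rintro ⟨j, hj⟩
  exact gr_not_ga hY i j hj.symm

end Greedy


lemma fin_one_eq_zero (i : Fin (0 + 1)) : i = 0 := by
  apply Fin.ext
  have := i.isLt
  simp
abbrev PosCell := {p : Cell // 0 < p.1}

instance : Infinite PosCell :=
  Infinite.of_injective (fun k : ℕ => (⟨⟨1, fun _ => k⟩, Nat.one_pos⟩ : PosCell))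
    (by
      intro a b hab
      have h1 : (⟨1, fun _ => a⟩ : Cell) = ⟨1, fun _ => b⟩ := congrArg Subtype.val hab
      injection h1 with h2 h3
      exact congrFun h3 0)

example : Countable PosCell := inferInstance

noncomputable def YofQ (X : (n : ℕ) → (Fin (n + 1) → ℕ) → Set ℕ) (q : ℕ ≃ PosCell) :
    ℕ → Set ℕ := fun i => Yset X (q i).val.1 (q i).val.2

noncomputable def bigF (X : (n : ℕ) → (Fin (n + 1) → ℕ) → Set ℕ) (q : ℕ ≃ PosCell)
    (β : ℕ → ℕ) : Cell → ℕ
  | ⟨0, x⟩ => β (x 0)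
  | ⟨N+1, x⟩ => ga (YofQ X q) (q.symm ⟨⟨N+1, x⟩, Nat.succ_pos N⟩)

lemma exists_goodF (X : (n : ℕ) → (Fin (n + 1) → ℕ) → Set ℕ) (hX : PartitionSystem X) :
    ∃ f : Cell → ℕ, Function.Bijective f ∧
      ∀ (N : ℕ) (x : Fin (N + 1) → ℕ) (n : ℕ) (h : n + 1 ≤ N),
        f ⟨N, x⟩ ∈ X n (Fin.init (lastProj (Nat.succ_le_succ h) x)) := by
  classical
  obtain ⟨dS⟩ := nonempty_denumerable PosCell
  let q : ℕ ≃ PosCell := (@Denumerable.eqv PosCell dS).symm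
  set Y : ℕ → Set ℕ := YofQ X q with hYdef
  have hY : ∀ i, (Y i).Infinite := fun i => yset_infinite X hX _ _
  set L : Set ℕ := (Set.range (ga Y))ᶜ with hLdef
  have hLinf : L.Infinite := compl_range_ga_infinite hY
  haveI : Infinite ↥L := hLinf.to_subtype
  obtain ⟨dL⟩ := nonempty_denumerable ↥L
  let βe : ℕ ≃ ↥L := (@Denumerable.eqv ↥L dL).symm
  set β : ℕ → ℕ := fun t => (βe t : ℕ) with hβdef
  have hβinj : Function.Injective β := fun a b h => βe.injective (Subtype.ext h)
  have hβmem : ∀ t, β t ∈ L := fun t => (βe t).2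
  have hβsurj : ∀ b ∈ L, ∃ t, β t = b := by
    intro b hb
    exact ⟨βe.symm ⟨b, hb⟩, by simp [hβdef]⟩
  refine ⟨bigF X q β, ⟨?_, ?_⟩, ?_⟩
  · -- injective
    rintro ⟨N1, x1⟩ ⟨N2, x2⟩ h
    cases N1 with
    | zero =>
      cases N2 with
      | zero =>
        have hx : x1 0 = x2 0 := hβinj h
        have hxx : x1 = x2 := by
          funext i
          rw [fin_one_eq_zero i]; exact hx
        rw [hxx]
      | succ N2 =>
        exfalso
        have h1 : β (x1 0) ∈ L := hβmem _
        have h' : β (x1 0) = ga Y (q.symm ⟨⟨N2+1, x2⟩, Nat.succ_pos N2⟩) := h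
        rw [h'] at h1
        exact h1 ⟨_, rfl⟩
    | succ N1 =>
      cases N2 with
      | zero =>
        exfalso
        have h1 : β (x2 0) ∈ L := hβmem _
        have h' : ga Y (q.symm ⟨⟨N1+1, x1⟩, Nat.succ_pos N1⟩) = β (x2 0) := h
        rw [← h'] at h1
        exact h1 ⟨_, rfl⟩
      | succ N2 =>
        have h2 := ga_inj hY (show ga Y (q.symm ⟨⟨N1+1, x1⟩, Nat.succ_pos N1⟩)
          = ga Y (q.symm ⟨⟨N2+1, x2⟩, Nat.succ_pos N2⟩) from h)
        have h3 := q.symm.injective h2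
        exact congrArg Subtype.val h3
  · -- surjective
    intro b
    by_cases hb : b ∈ Set.range (ga Y)
    · obtain ⟨i, hi⟩ := hb
      rcases hqi : q i with ⟨⟨N, x⟩, hpos⟩
      cases N with
      | zero => exact (Nat.lt_irrefl 0 hpos).elim
      | succ M =>
        refine ⟨⟨M+1, x⟩, ?_⟩
        have he : (⟨⟨M+1, x⟩, Nat.succ_pos M⟩ : PosCell) = q i := by rw [hqi]
        show ga Y (q.symm ⟨⟨M+1, x⟩, Nat.succ_pos M⟩) = b
        rw [he, Equiv.symm_apply_apply, hi]
    · have hbL : b ∈ L := hb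
      obtain ⟨t, ht⟩ := hβsurj b hbL
      exact ⟨⟨0, fun _ => t⟩, ht⟩
  · -- constraint
    intro N x n h
    cases N with
    | zero => exact absurd h (by omega)
    | succ M =>
      have hmem := (ga_spec hY (q.symm ⟨⟨M+1, x⟩, Nat.succ_pos M⟩)).1
      have he : q (q.symm ⟨⟨M+1, x⟩, Nat.succ_pos M⟩) = ⟨⟨M+1, x⟩, Nat.succ_pos M⟩ :=
        Equiv.apply_symm_apply _ _
      have hYi : Y (q.symm ⟨⟨M+1, x⟩, Nat.succ_pos M⟩) = Yset X (M+1) x := by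
        rw [hYdef]
        show Yset X (q (q.symm ⟨⟨M+1, x⟩, Nat.succ_pos M⟩)).val.1
          (q (q.symm ⟨⟨M+1, x⟩, Nat.succ_pos M⟩)).val.2 = Yset X (M+1) x
        rw [he]
      rw [hYi] at hmem
      exact hmem n h

lemma preimage_copy_mem (X : (n : ℕ) → (Fin (n + 1) → ℕ) → Set ℕ)
    (f : Cell → ℕ) (hfb : Function.Bijective f)
    (hf : ∀ (N : ℕ) (x : Fin (N + 1) → ℕ) (n : ℕ) (h : n + 1 ≤ N),
      f ⟨N, x⟩ ∈ X n (Fin.init (lastProj (Nat.succ_le_succ h) x)))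
    (n : ℕ) (B : Set ℕ) (hB : B ∈ FinPowCopy (X n)) : f ⁻¹' B ∈ FinOmega := by
  classical
  set S : Set (Fin (n + 1) → ℕ) := {s | ¬ (B ∩ X n s).Finite} with hSdef
  have hS : S ∈ FinPow n := hB
  set E := Equiv.ofBijective f hfb with hEdef
  set Q1 : Set (Fin (n + 2) → ℕ) := {z | Fin.init z ∈ S} with hQ1
  set Q2 : Set (Fin (n + 2) → ℕ) := {z | Fin.init z ∉ S ∧ ∃ (N : ℕ) (hN : n + 1 ≤ N)
      (x : Fin (N + 1) → ℕ), f ⟨N, x⟩ ∈ B ∧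
      lastProj (Nat.succ_le_succ hN) x = z} with hQ2
  refine ⟨n + 1, (Q1 ∪ Q2)ᶜ, ?_, ?_⟩
  · rw [compl_compl]
    refine finPow_union _ _ _ (finPow_initCyl n S hS) ?_
    refine finPow_fiberFinite n Q2 ?_
    intro s
    by_cases hs : s ∈ S
    · have : {z | z ∈ Q2 ∧ Fin.init z = s} = ∅ := by
        ext z
        simp only [Set.mem_empty_iff_false, iff_false, Set.mem_setOf_eq]
        rintro ⟨⟨hz1, -⟩, hz2⟩
        rw [hz2] at hz1
        exact hz1 hs
      rw [this]; exact Set.finite_empty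
    · have hBs : (B ∩ X n s).Finite := not_not.mp hs
      set proj' : Cell → (Fin (n + 2) → ℕ) := fun p =>
        if h : n + 2 ≤ p.1 + 1 then lastProj h p.2 else fun _ => 0 with hproj'
      refine ((hBs.image (fun b => proj' (E.symm b))).subset ?_)
      rintro z ⟨⟨-, N, hN, x, hfB, hlp⟩, hinit⟩
      refine ⟨f ⟨N, x⟩, ⟨hfB, ?_⟩, ?_⟩
      · have := hf N x n hN
        rw [hlp, hinit] at this
        exact this
      · have hsym : E.symm (f ⟨N, x⟩) = ⟨N, x⟩ := by
          rw [show f ⟨N, x⟩ = E ⟨N, x⟩ from rfl]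
          exact E.symm_apply_apply _
        show proj' (E.symm (f ⟨N, x⟩)) = z
        rw [hsym]
        show proj' ⟨N, x⟩ = z
        rw [hproj']
        simp only
        rw [dif_pos (show n + 2 ≤ N + 1 from Nat.succ_le_succ hN)]
        exact hlp
  · intro N hN x hz hmem
    have hfB : f ⟨N, x⟩ ∈ B := hmem
    apply hz
    by_cases hs : Fin.init (lastProj (Nat.succ_le_succ hN) x) ∈ S
    · left; exact hs
    · right
      exact ⟨hs, N, hN, x, hfB, rfl⟩

lemma finOmega_biUnion (F : Finset ℕ) (M : ℕ → Set Cell)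
    (h : ∀ n ∈ F, M n ∈ FinOmega) : (⋃ n ∈ F, M n) ∈ FinOmega := by
  classical
  induction F using Finset.induction with
  | empty => simpa using finOmega_empty
  | insert a Fs hni ih =>
    rw [Finset.set_biUnion_insert]
    exact finOmega_union (h a (Finset.mem_insert_self a Fs))
      (ih fun n hn => h n (Finset.mem_insert_of_mem hn))


end Aux

/-- `Fin'_ω` embeds isomorphically into `Fin_ω`: there is a
bijection `f : ∑_{i>0} ω^i → ω` with `f⁻¹[A] ∈ Fin_ω` for all `A ∈ Fin'_ω`. -/
theorem finOmega'_isoContained_finOmega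
    (X : (n : ℕ) → (Fin (n + 1) → ℕ) → Set ℕ) (hX : PartitionSystem X) :
    ∃ f : (Σ n : ℕ, Fin (n + 1) → ℕ) → ℕ, Function.Bijective f ∧
      ∀ A ∈ FinOmega' X, f ⁻¹' A ∈ FinOmega := by
  obtain ⟨f, hfb, hf⟩ := exists_goodF X hX
  refine ⟨f, hfb, ?_⟩
  rintro A ⟨F, B, hB, hsub⟩
  refine finOmega_subset ?_ (finOmega_biUnion F (fun n => f ⁻¹' (B n))
    (fun n hn => preimage_copy_mem X f hfb hf n (B n) (hB n hn)))
  intro p hp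
  have := hsub hp
  simp only [Set.mem_iUnion] at this ⊢
  obtain ⟨i, hi, hbi⟩ := this
  exact ⟨i, hi, hbi⟩
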